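/- Let W be a real vector space and let σ and μ be positive definite symmetric bilinear forms on W. If x, y ∈ W are linearly independent, then the sectional curvature of the Kulkarni–Nomizu product is strictly positive: (σ ∧ μ)(x,y,x,y) = σ(x,x)μ(y,y) + μ(x,x)σ(y,y) − 2σ(x,y)μ(x,y) > 0. Consequently, for positive definite σ and μ, (σ ∧ μ)(x,y,x,y) = 0 if and only if x and y are linearly dependent. -/

import Mathlib

/-- The Kulkarni–Nomizu product of two bilinear forms `σ` and `μ` on a real
vector space `W`. -/
def kulkarniNomizu {W : Type*} [AddCommGroup W] [Module ℝ W]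
    (σ μ : W →ₗ[ℝ] W →ₗ[ℝ] ℝ) (x y z w : W) : ℝ :=
  σ x z * μ y w - σ x w * μ y z + μ x z * σ y w - μ x w * σ y z

lemma cs_aux {W : Type*} [AddCommGroup W] [Module ℝ W]
    (σ : W →ₗ[ℝ] W →ₗ[ℝ] ℝ)
    (hσ : ∀ x y : W, σ x y = σ y x)
    (hσpos : ∀ x : W, x ≠ 0 → 0 < σ x x)
    {x y : W} (h : LinearIndependent ℝ ![x, y]) :
    σ x y ^ 2 < σ x x * σ y y := by
  have hy : y ≠ 0 := by
    intro hy0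
    exact one_ne_zero ((LinearIndependent.pair_iff.mp h 0 1 (by simp [hy0])).2)
  have hByy : 0 < σ y y := hσpos y hy
  set t : ℝ := -(σ x y) / (σ y y) with ht
  have hne : x + t • y ≠ 0 := by
    intro h0
    have := (LinearIndependent.pair_iff.mp h 1 t (by simpa using h0)).1
    norm_num at this
  have hpos := hσpos _ hne
  have hexp : σ (x + t • y) (x + t • y)
      = σ x x + 2 * t * σ x y + t ^ 2 * σ y y := by
    simp [map_add, map_smul, hσ y x]
    ring
  rw [hexp] at hpos
  have h2 : σ x x + 2 * t * σ x y + t ^ 2 * σ y y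
      = σ x x - σ x y ^ 2 / σ y y := by
    rw [ht]
    field_simp
    ring
  rw [h2] at hpos
  have := (div_lt_iff₀ hByy).mp (by linarith : σ x y ^ 2 / σ y y < σ x x)
  linarith

/-- For positive definite symmetric bilinear forms `σ` and `μ`, the
sectional curvature of the Kulkarni–Nomizu product is strictly positive on
linearly independent pairs, and it vanishes exactly on linearly dependent pairs. -/
theorem statement_9
    {W : Type*} [AddCommGroup W] [Module ℝ W]
    (σ μ : W →ₗ[ℝ] W →ₗ[ℝ] ℝ)
    (hσ : ∀ x y : W, σ x y = σ y x)
    (hμ : ∀ x y : W, μ x y = μ y x)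
    (hσpos : ∀ x : W, x ≠ 0 → 0 < σ x x)
    (hμpos : ∀ x : W, x ≠ 0 → 0 < μ x x) :
    (∀ x y : W, LinearIndependent ℝ ![x, y] →
      kulkarniNomizu σ μ x y x y
        = σ x x * μ y y + μ x x * σ y y - 2 * (σ x y * μ x y) ∧
      0 < kulkarniNomizu σ μ x y x y) ∧
    (∀ x y : W,
      kulkarniNomizu σ μ x y x y = 0 ↔ ¬ LinearIndependent ℝ ![x, y]) := by
  have key : ∀ x y : W, LinearIndependent ℝ ![x, y] →
      kulkarniNomizu σ μ x y x y
        = σ x x * μ y y + μ x x * σ y y - 2 * (σ x y * μ x y) ∧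
      0 < kulkarniNomizu σ μ x y x y := by
    intro x y h
    have hx : x ≠ 0 := by
      intro hx0
      exact one_ne_zero ((LinearIndependent.pair_iff.mp h 1 0 (by simp [hx0])).1)
    have hy : y ≠ 0 := by
      intro hy0
      exact one_ne_zero ((LinearIndependent.pair_iff.mp h 0 1 (by simp [hy0])).2)
    have hcs1 := cs_aux σ hσ hσpos h
    have hcs2 := cs_aux μ hμ hμpos h
    have hA := hσpos x hx
    have hB := hσpos y hy
    have hC := hμpos x hx
    have hD := hμpos y hy
    have heq : kulkarniNomizu σ μ x y x y
        = σ x x * μ y y + μ x x * σ y y - 2 * (σ x y * μ x y) := by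
      simp [kulkarniNomizu, hσ y x, hμ y x]
      ring
    have hprod : σ x y ^ 2 * μ x y ^ 2 < σ x x * σ y y * (μ x x * μ y y) := by
      nlinarith [sq_nonneg (σ x y), sq_nonneg (μ x y), mul_pos hA hB]
    refine ⟨heq, ?_⟩
    rw [heq]
    nlinarith [hprod, sq_nonneg (σ x x * μ y y - μ x x * σ y y),
      sq_nonneg (σ x y * μ x y), mul_pos hA hD, mul_pos hC hB,
      mul_pos (mul_pos hA hB) (mul_pos hC hD),
      sq_nonneg (σ x y + μ x y), sq_nonneg (σ x y - μ x y),
      sq_nonneg (σ x x * μ y y + μ x x * σ y y)]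
  have dep_zero : ∀ x y : W, ¬ LinearIndependent ℝ ![x, y] →
      kulkarniNomizu σ μ x y x y = 0 := by
    intro x y h
    rw [LinearIndependent.pair_iff] at h
    push_neg at h
    obtain ⟨s, t, hst, hne⟩ := h
    by_cases ht : t = 0
    · subst ht
      simp only [smul_zero, add_zero, zero_smul] at hst
      have hs : s ≠ 0 := by tauto
      have hx0 : x = 0 := by
        have := smul_eq_zero.mp hst
        tauto
      simp [kulkarniNomizu, hx0]
    · have h1 : t • y = (-s) • x := by
        rw [neg_smul, eq_neg_iff_add_eq_zero, add_comm]; exact hst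
      have hy : y = (t⁻¹ * (-s)) • x := by
        rw [← inv_smul_smul₀ ht y, h1, smul_smul]
      rw [hy]
      simp [kulkarniNomizu, map_smul, hσ x, hμ x]
      ring
  constructor
  · exact key
  · intro x y
    constructor
    · intro h0 hli
      exact absurd h0 (ne_of_gt (key x y hli).2)
    · exact dep_zero x y
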